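/- Let n ∈ ℕ with n ≥ 2, let H ⊆ ℝ with |H| ≥ n+1, let ω = (ω₁, …, ω_n) : H → ℝⁿ be an n-dimensional positive Chebyshev system over H such that ω_{⟨n−1⟩} is an (n−1)-dimensional positive Chebyshev system over H, and let f : H → ℝ. Suppose there exists ℓ ∈ {0, …, n−1} such that for each (n−1)-tuple x₁ < … < x_{n−1} in H, the function x ↦ [x₁, …, x_{n−1}, x; f]_ω is nondecreasing on H ∩ (−∞, x₁) if ℓ = 0, on H ∩ (x_ℓ, x_{ℓ+1}) if 0 < ℓ < n−1, and on H ∩ (x_{n−1}, +∞) if ℓ = n−1. Then f is ω-convex. -/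

import Mathlib

/-- `Φ_ω(x₁,…,x_m) = det(ω_i(x_j))`. -/
noncomputable def Phi {m : ℕ} (ω : Fin m → ℝ → ℝ) (x : Fin m → ℝ) : ℝ :=
  Matrix.det (Matrix.of fun i j => ω i (x j))

/-- `ω` is an `m`-dimensional positive Chebyshev system over `H`. -/
def IsPosChebyshev {m : ℕ} (ω : Fin m → ℝ → ℝ) (H : Set ℝ) : Prop :=
  ∀ x : Fin m → ℝ, (∀ i, x i ∈ H) → StrictMono x → 0 < Phi ω x

/-- `f` is convex with respect to the `m`-dimensional system `ω` on `S`. -/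
def IsConvexWRT {m : ℕ} (ω : Fin m → ℝ → ℝ) (S : Set ℝ) (f : ℝ → ℝ) : Prop :=
  ∀ x : Fin (m + 1) → ℝ, (∀ i, x i ∈ S) → StrictMono x → 0 ≤ Phi (Fin.snoc ω f) x

/-- The generalized divided difference `[x₁,…,x_k; f]_{ω⟨k⟩}`:
the numerator replaces the last function `ω_k` by `f`. -/
noncomputable def divDiff {k : ℕ} (ω : Fin k → ℝ → ℝ) (f : ℝ → ℝ) (x : Fin k → ℝ) : ℝ :=
  Phi (fun i => if (i : ℕ) + 1 = k then f else ω i) x / Phi ω x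

open Finset

lemma Phi_comp_perm {k : ℕ} (F : Fin k → ℝ → ℝ) (a : Fin k → ℝ) (σ : Equiv.Perm (Fin k)) :
    Phi F (a ∘ σ) = ((Equiv.Perm.sign σ : ℤ) : ℝ) * Phi F a := by
  have h : (Matrix.of fun i j => F i ((a ∘ σ) j)) =
      (Matrix.of fun i j => F i (a j)).submatrix id σ := rfl
  rw [Phi, h, Matrix.det_permute']
  rfl

lemma snoc_of_lt {k : ℕ} (q : Fin k → ℝ) (t : ℝ) (i : Fin (k + 1)) (h : (i : ℕ) < k) :
    (Fin.snoc q t : Fin (k + 1) → ℝ) i = q ⟨i, h⟩ := by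
  simp only [Fin.snoc, h, dif_pos]
  simp only [cast_eq]
  rfl

lemma snoc_of_eq {k : ℕ} (q : Fin k → ℝ) (t : ℝ) (i : Fin (k + 1)) (h : (i : ℕ) = k) :
    (Fin.snoc q t : Fin (k + 1) → ℝ) i = t := by
  simp [Fin.snoc, h]

lemma succAbove_coe {k : ℕ} (p : Fin (k + 1)) (i : Fin k) :
    ((p.succAbove i : Fin (k + 1)) : ℕ) =
      if (i : ℕ) < (p : ℕ) then (i : ℕ) else (i : ℕ) + 1 := by
  rcases lt_or_ge ((i : ℕ)) ((p : ℕ)) with h | h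
  · rw [Fin.succAbove_of_castSucc_lt _ _ (by simpa [Fin.lt_def] using h), if_pos h]
    rfl
  · rw [Fin.succAbove_of_le_castSucc _ _ (by simpa [Fin.le_def] using h),
      if_neg (not_lt.mpr h)]
    rfl

/-- Moving the point at position `p` to the end multiplies the determinant
by `(-1)^(k - p)`. -/
lemma Phi_snoc_remove {k : ℕ} (F : Fin (k + 1) → ℝ → ℝ) (y : Fin (k + 1) → ℝ)
    (p : Fin (k + 1)) :
    Phi F (Fin.snoc (y ∘ p.succAbove) (y p)) = (-1 : ℝ) ^ (k - (p : ℕ)) * Phi F y := by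
  set kk : Fin (k + 1) := ⟨k - (p : ℕ), by omega⟩ with hkk
  set τ : Equiv.Perm (Fin (k + 1)) := Fin.revPerm * kk.cycleRange * Fin.revPerm with hτ
  have happly : ∀ i, τ i = Fin.rev (kk.cycleRange (Fin.rev i)) := by
    intro i
    simp [hτ, Equiv.Perm.mul_apply]
  have hpt : y = (Fin.snoc (y ∘ p.succAbove) (y p)) ∘ τ := by
    funext i
    have hiv : (i : ℕ) < k + 1 := i.isLt
    have hpv : (p : ℕ) < k + 1 := p.isLt
    have hrev : ((Fin.rev i : Fin (k + 1)) : ℕ) = k - (i : ℕ) := by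
      simp only [Fin.val_rev]; omega
    rcases lt_trichotomy ((i : ℕ)) ((p : ℕ)) with hlt | heq | hgt
    · -- τ i = i
      have h1 : kk < Fin.rev i := by
        rw [Fin.lt_def, hrev]; simp [hkk]; omega
      have h2 : τ i = i := by
        rw [happly, Fin.cycleRange_of_gt h1, Fin.rev_rev]
      simp only [Function.comp_apply, h2]
      rw [snoc_of_lt _ _ i (by omega)]
      simp only [Function.comp_apply]
      congr 1
      ext
      rw [succAbove_coe]
      simp only [Fin.val_mk]
      split_ifs <;> omega
    · -- τ i = last
      have h1 : Fin.rev i = kk := by ext; rw [hrev]; simp [hkk]; omega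
      have h2 : τ i = Fin.last k := by
        rw [happly, h1, Fin.cycleRange_self]
        ext
        simp [Fin.val_rev]
      simp only [Function.comp_apply, h2]
      rw [Fin.snoc_last]
      congr 1
      ext
      exact heq
    · -- τ i = i - 1
      have h1 : Fin.rev i < kk := by
        rw [Fin.lt_def, hrev]; simp [hkk]; omega
      have h2 : ((kk.cycleRange (Fin.rev i) : Fin (k + 1)) : ℕ) = k - (i : ℕ) + 1 := by
        rw [Fin.coe_cycleRange_of_lt h1, hrev]
      have h3 : ((τ i : Fin (k + 1)) : ℕ) = (i : ℕ) - 1 := by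
        rw [happly, Fin.val_rev, h2]; omega
      simp only [Function.comp_apply]
      rw [snoc_of_lt _ _ (τ i) (by omega)]
      simp only [Function.comp_apply]
      congr 1
      ext
      rw [succAbove_coe]
      simp only [Fin.val_mk, h3]
      split_ifs <;> omega
  have hsign : ((Equiv.Perm.sign τ : ℤ) : ℝ) = (-1 : ℝ) ^ (k - (p : ℕ)) := by
    have : Equiv.Perm.sign τ = (-1) ^ (k - (p : ℕ)) := by
      rw [hτ, map_mul, map_mul, Fin.sign_cycleRange,
        mul_comm (Equiv.Perm.sign (Fin.revPerm : Equiv.Perm (Fin (k + 1)))) _,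
        mul_assoc, Int.units_mul_self, mul_one]
    rw [this]
    push_cast
    rfl
  have := Phi_comp_perm F (Fin.snoc (y ∘ p.succAbove) (y p)) τ
  rw [← hpt, hsign] at this
  rw [this, ← mul_assoc, ← pow_add]
  have : (-1 : ℝ) ^ ((k - (p : ℕ)) + (k - (p : ℕ))) = 1 := by
    rw [← two_mul, pow_mul]
    norm_num
  rw [this, one_mul]

lemma Phi_snoc_updateRow {k : ℕ} (F : Fin k → ℝ → ℝ) (f h : ℝ → ℝ) (a : Fin (k + 1) → ℝ) :
    Phi (Fin.snoc F h) a =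
      ((Matrix.of fun i j => (Fin.snoc F f : Fin (k+1) → ℝ → ℝ) i (a j)).updateRow
        (Fin.last k) (fun j => h (a j))).det := by
  rw [Phi]
  congr 1
  ext i j
  refine Fin.lastCases ?_ (fun i => ?_) i
  · simp
  · rw [Matrix.updateRow_ne (Fin.castSucc_lt_last i).ne]
    simp

lemma Phi_snoc_sub_sum {k r : ℕ} (F : Fin k → ℝ → ℝ) (f : ℝ → ℝ) (c : Fin r → ℝ)
    (ψ : Fin r → ℝ → ℝ) (a : Fin (k + 1) → ℝ) :
    Phi (Fin.snoc F (fun t => f t - ∑ i, c i * ψ i t)) a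
      = Phi (Fin.snoc F f) a - ∑ i, c i * Phi (Fin.snoc F (ψ i)) a := by
  set M0 := (Matrix.of fun i j => (Fin.snoc F f : Fin (k+1) → ℝ → ℝ) i (a j)) with hM0
  let L : (Fin (k + 1) → ℝ) →ₗ[ℝ] ℝ :=
    { toFun := fun r => (M0.updateRow (Fin.last k) r).det
      map_add' := fun u v => Matrix.det_updateRow_add M0 (Fin.last k) u v
      map_smul' := fun s u => Matrix.det_updateRow_smul M0 (Fin.last k) s u }
  have hL : ∀ h : ℝ → ℝ, Phi (Fin.snoc F h) a = L (fun j => h (a j)) :=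
    fun h => Phi_snoc_updateRow F f h a
  rw [hL, hL f]
  have hrow : (fun j => f (a j) - ∑ i, c i * ψ i (a j))
      = (fun j => f (a j)) - ∑ i, c i • (fun j => ψ i (a j)) := by
    funext j
    simp [Finset.sum_apply]
  rw [hrow, map_sub, map_sum]
  congr 1
  refine Finset.sum_congr rfl fun i _ => ?_
  rw [map_smul, smul_eq_mul, hL (ψ i)]

lemma Phi_snoc_dup {k : ℕ} (F : Fin k → ℝ → ℝ) (i0 : Fin k) (a : Fin (k + 1) → ℝ) :
    Phi (Fin.snoc F (F i0)) a = 0 := by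
  rw [Phi]
  refine Matrix.det_zero_of_row_eq (M := Matrix.of fun i j => (Fin.snoc F (F i0) : Fin (k+1) → ℝ → ℝ) i (a j))
    (i := Fin.castSucc i0) (j := Fin.last k) (Fin.castSucc_lt_last i0).ne ?_
  funext j
  simp

lemma Phi_expand_single {k : ℕ} (F : Fin (k + 1) → ℝ → ℝ) (a : Fin (k + 1) → ℝ)
    (j0 : Fin (k + 1)) (hrow : ∀ j : Fin (k + 1), j ≠ j0 → F (Fin.last k) (a j) = 0) :
    Phi F a = (-1 : ℝ) ^ (k + (j0 : ℕ)) * F (Fin.last k) (a j0) *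
      Phi (fun i => F (Fin.castSucc i)) (a ∘ j0.succAbove) := by
  have hA : ∀ b : Fin (k + 1),
      ((Matrix.of fun i j => F i (a j)).submatrix (Fin.last k).succAbove b.succAbove).det
        = Phi (fun i => F (Fin.castSucc i)) (a ∘ b.succAbove) := by
    intro b
    rw [Phi]
    congr 1
    ext i j
    simp [Fin.succAbove_last]
  rw [Phi, Matrix.det_succ_row _ (Fin.last k), Finset.sum_eq_single j0]
  · rw [hA j0]
    simp
  · intro b _ hb
    simp [hrow b hb]
  · intro h
    exact absurd (Finset.mem_univ j0) h

set_option maxHeartbeats 1600000 in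
/-- Corollary 1 (Wąsowicz), (iii) ⇒ (i): if there exists `ℓ ∈ {0,…,n-1}` such that, for each
`x₁ < … < x_{n-1}` in `H`, the function `x ↦ [x₁,…,x_{n-1},x; f]_ω` is nondecreasing on
`H ∩ (-∞, x₁)` if `ℓ = 0`, on `H ∩ (x_ℓ, x_{ℓ+1})` if `0 < ℓ < n-1`, and on
`H ∩ (x_{n-1}, ∞)` if `ℓ = n-1` (the three cases are captured uniformly by the set
`{y | x_i < y for i ≤ ℓ and y < x_i for i > ℓ}`), then `f` is `ω`-convex. -/
theorem divided_difference_monotone_implies_omega_convex (n : ℕ) (hn : 2 ≤ n) (H : Set ℝ)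
    (hH : n + 1 ≤ H.ncard ∨ H.Infinite)
    (ω : Fin n → ℝ → ℝ) (f : ℝ → ℝ)
    (hω : IsPosChebyshev ω H)
    (hω' : IsPosChebyshev (fun i : Fin (n - 1) => ω (Fin.castLE (by omega) i)) H)
    (hyp : ∃ ℓ : ℕ, ℓ ≤ n - 1 ∧
      ∀ x : Fin (n - 1) → ℝ, (∀ i, x i ∈ H) → StrictMono x →
        MonotoneOn
          (fun y : ℝ => divDiff ω f (Fin.snoc x y ∘ Fin.cast (by omega : n = n - 1 + 1)))
          (H ∩ {y : ℝ | (∀ i : Fin (n - 1), (i : ℕ) < ℓ → x i < y) ∧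
            (∀ i : Fin (n - 1), ℓ ≤ (i : ℕ) → y < x i)})) :
    IsConvexWRT ω H f := by
  obtain ⟨m, rfl⟩ : ∃ m, n = m + 2 := ⟨n - 2, by omega⟩
  obtain ⟨ℓ, hℓ, hmono⟩ := hyp
  have hℓ' : ℓ ≤ m + 1 := by omega
  intro x hxH hx
  -- index embeddings
  set eZ : Fin (m + 1) → Fin (m + 3) :=
    fun i => ⟨if (i : ℕ) < ℓ then (i : ℕ) else (i : ℕ) + 2, by split <;> omega⟩ with heZ
  set eW : Fin (m + 2) → Fin (m + 3) :=
    fun i => ⟨if (i : ℕ) < ℓ + 1 then (i : ℕ) else (i : ℕ) + 1, by split <;> omega⟩ with heW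
  set eS : Fin (m + 2) → Fin (m + 3) :=
    fun i => ⟨if (i : ℕ) < ℓ then (i : ℕ) else (i : ℕ) + 1, by split <;> omega⟩ with heS
  have heZm : StrictMono eZ := by
    intro a b h
    simp only [heZ, Fin.lt_def, Fin.mk_lt_mk] at *
    split_ifs <;> omega
  have heWm : StrictMono eW := by
    intro a b h
    simp only [heW, Fin.lt_def, Fin.mk_lt_mk] at *
    split_ifs <;> omega
  have heSm : StrictMono eS := by
    intro a b h
    simp only [heS, Fin.lt_def, Fin.mk_lt_mk] at *
    split_ifs <;> omega
  set z : Fin (m + 1) → ℝ := x ∘ eZ with hzdef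
  set w : Fin (m + 2) → ℝ := x ∘ eW with hwdef
  set s : Fin (m + 2) → ℝ := x ∘ eS with hsdef
  set u : ℝ := x ⟨ℓ, by omega⟩ with hudef
  set v : ℝ := x ⟨ℓ + 1, by omega⟩ with hvdef
  have hzH : ∀ i, z i ∈ H := fun i => hxH _
  have hzm : StrictMono z := hx.comp heZm
  set ω'' : Fin (m + 1) → ℝ → ℝ := fun i => ω i.castSucc with hω''def
  have hω2 : IsPosChebyshev ω'' H := hω'
  -- positivity facts
  have hPw : 0 < Phi ω w := hω w (fun i => hxH _) (hx.comp heWm)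
  have hPs : 0 < Phi ω s := hω s (fun i => hxH _) (hx.comp heSm)
  have hPz : 0 < Phi ω'' z := hω2 z hzH hzm
  -- interpolation
  set MW : Matrix (Fin (m + 2)) (Fin (m + 2)) ℝ := Matrix.of fun i j => ω i (w j) with hMW
  have hdet : MW.det ≠ 0 := ne_of_gt hPw
  set c : Fin (m + 2) → ℝ := Matrix.vecMul (fun j => f (w j)) MW⁻¹ with hcdef
  have hc : ∀ j, (∑ i, c i * ω i (w j)) = f (w j) := by
    have h1 : Matrix.vecMul c MW = fun j => f (w j) := by
      rw [hcdef, Matrix.vecMul_vecMul, Matrix.nonsing_inv_mul MW (isUnit_iff_ne_zero.mpr hdet),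
        Matrix.vecMul_one]
    intro j
    have h2 := congrFun h1 j
    simpa [Matrix.vecMul, dotProduct, hMW] using h2
  set g : ℝ → ℝ := fun t => f t - ∑ i, c i * ω i t with hgdef
  have hgw : ∀ j, g (w j) = 0 := by
    intro j
    simp only [hgdef, hc j, sub_self]
  have hg : ∀ t : Fin (m + 3), (t : ℕ) ≠ ℓ + 1 → g (x t) = 0 := by
    intro t ht
    rcases lt_or_ge ((t : ℕ)) (ℓ + 1) with h | h
    · have h2 : t = eW ⟨(t : ℕ), by omega⟩ := by
        ext
        simp [heW, h, Nat.lt_succ_iff.mp h]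
      rw [h2]
      exact hgw _
    · have h' : ℓ + 1 < (t : ℕ) := by omega
      have h2 : t = eW ⟨(t : ℕ) - 1, by omega⟩ := by
        ext
        simp only [heW]
        rw [if_neg (by omega)]
        omega
      rw [h2]
      exact hgw _
  -- numerator of divDiff is Phi (snoc ω'' ·)
  have hFnum : (fun i : Fin (m + 2) => if (i : ℕ) + 1 = m + 2 then f else ω i)
      = Fin.snoc ω'' f := by
    funext i
    refine Fin.lastCases ?_ (fun i => ?_) i
    · simp
    · rw [Fin.snoc_castSucc, if_neg (by simp; omega)]
  -- numerator relation: Phi (snoc ω'' g) = Phi (snoc ω'' f) - c_last * Phi ω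
  have hNg : ∀ a : Fin (m + 2) → ℝ,
      Phi (Fin.snoc ω'' g) a = Phi (Fin.snoc ω'' f) a - c (Fin.last (m + 1)) * Phi ω a := by
    intro a
    have h1 := Phi_snoc_sub_sum ω'' f c ω a
    rw [hgdef] at *
    rw [h1]
    congr 1
    rw [Finset.sum_eq_single (Fin.last (m + 1))]
    · have hsn : (Fin.snoc ω'' (ω (Fin.last (m + 1))) : Fin (m + 2) → ℝ → ℝ) = ω := by
        funext i
        refine Fin.lastCases ?_ (fun i => ?_) i
        · simp
        · simp [hω''def]
      rw [hsn]
    · intro b _ hb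
      obtain ⟨b', rfl⟩ := Fin.exists_castSucc_eq.2 hb
      have : ω (Fin.castSucc b') = ω'' b' := rfl
      rw [this, Phi_snoc_dup, mul_zero]
    · intro h
      exact absurd (Finset.mem_univ _) h
  -- the final determinant is unchanged by replacing f with g
  have hfinal_eq : Phi (Fin.snoc ω f) x = Phi (Fin.snoc ω g) x := by
    have h1 := Phi_snoc_sub_sum ω f c ω x
    rw [hgdef]
    rw [h1]
    have h2 : ∀ i : Fin (m + 2), c i * Phi (Fin.snoc ω (ω i)) x = 0 := by
      intro i
      rw [Phi_snoc_dup, mul_zero]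
    rw [Finset.sum_congr rfl (fun i _ => h2 i), Finset.sum_const_zero, sub_zero]
  -- denominators
  set p : Fin (m + 2) := ⟨ℓ, by omega⟩ with hp
  have hwz : w ∘ p.succAbove = z := by
    funext i
    simp only [Function.comp_apply, hwdef, hzdef]
    congr 1
    ext
    simp only [heW, heZ]
    rw [succAbove_coe]
    simp only [hp]
    split_ifs <;> omega
  have hsz : s ∘ p.succAbove = z := by
    funext i
    simp only [Function.comp_apply, hsdef, hzdef]
    congr 1
    ext
    simp only [heS, heZ]
    rw [succAbove_coe]
    simp only [hp]
    split_ifs <;> omega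
  have hwp : w p = u := by
    simp only [hwdef, hudef, Function.comp_apply]
    congr 1
    ext
    simp [heW, hp]
  have hsp : s p = v := by
    simp only [hsdef, hvdef, Function.comp_apply]
    congr 1
    ext
    simp only [heS, hp]
    rw [if_neg (by omega)]
  have hDu : Phi ω (Fin.snoc z u) = (-1 : ℝ) ^ (m + 1 - ℓ) * Phi ω w := by
    have := Phi_snoc_remove ω w p
    rw [hwz, hwp] at this
    exact this
  have hDv : Phi ω (Fin.snoc z v) = (-1 : ℝ) ^ (m + 1 - ℓ) * Phi ω s := by
    have := Phi_snoc_remove ω s p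
    rw [hsz, hsp] at this
    exact this
  set ε : ℝ := (-1 : ℝ) ^ (m + 1 - ℓ) with hε
  have hεsq : ε * ε = 1 := by
    rw [hε, ← pow_add, ← two_mul, pow_mul]
    norm_num
  have hDu0 : Phi ω (Fin.snoc z u) ≠ 0 := by
    rw [hDu]
    exact mul_ne_zero (by positivity) (ne_of_gt hPw)
  have hDv0 : Phi ω (Fin.snoc z v) ≠ 0 := by
    rw [hDv]
    exact mul_ne_zero (by positivity) (ne_of_gt hPs)
  -- numerators with g
  have hNgu : Phi (Fin.snoc ω'' g) (Fin.snoc z u) = 0 := by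
    rw [Phi]
    apply Matrix.det_eq_zero_of_row_eq_zero (Fin.last (m + 1))
    intro j
    simp only [Matrix.of_apply, Fin.snoc_last]
    rcases lt_or_ge ((j : ℕ)) (m + 1) with h | h
    · rw [snoc_of_lt _ _ j h]
      have hzx : z ⟨(j : ℕ), h⟩ = x (eZ ⟨(j : ℕ), h⟩) := rfl
      rw [hzx]
      apply hg
      simp only [heZ, Fin.val_mk]
      split_ifs <;> omega
    · rw [snoc_of_eq _ _ j (by omega)]
      apply hg
      simp
  have hNgv : Phi (Fin.snoc ω'' g) (Fin.snoc z v) = g v * Phi ω'' z := by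
    rw [Phi_expand_single _ _ (Fin.last (m + 1)) ?hrow]
    case hrow =>
      intro j hj
      obtain ⟨j', rfl⟩ := Fin.exists_castSucc_eq.2 hj
      rw [Fin.snoc_last, Fin.snoc_castSucc]
      apply hg
      simp only [hzdef, Function.comp_apply, heZ]
      split_ifs <;> omega
    rw [Fin.snoc_last, Fin.snoc_last]
    have hsign : (-1 : ℝ) ^ ((m + 1) + ((Fin.last (m + 1) : Fin (m + 2)) : ℕ)) = 1 := by
      simp only [Fin.val_last]
      rw [← two_mul, pow_mul]
      norm_num
    rw [hsign, one_mul]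
    congr 1
    · rw [Phi, Phi]
      congr 1
      ext i j
      simp [Fin.succAbove_last]
  -- apply the monotonicity hypothesis
  have hu_mem : u ∈ H ∩ {y : ℝ | (∀ i : Fin (m + 1), (i : ℕ) < ℓ → z i < y) ∧
      (∀ i : Fin (m + 1), ℓ ≤ (i : ℕ) → y < z i)} := by
    refine ⟨hxH _, fun i hi => ?_, fun i hi => ?_⟩
    · apply hx
      simp only [Fin.lt_def, heZ]
      rw [if_pos hi]
      exact hi
    · apply hx
      simp only [Fin.lt_def, heZ]
      rw [if_neg (by omega)]
      omega
  have hv_mem : v ∈ H ∩ {y : ℝ | (∀ i : Fin (m + 1), (i : ℕ) < ℓ → z i < y) ∧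
      (∀ i : Fin (m + 1), ℓ ≤ (i : ℕ) → y < z i)} := by
    refine ⟨hxH _, fun i hi => ?_, fun i hi => ?_⟩
    · apply hx
      simp only [Fin.lt_def, heZ]
      rw [if_pos hi]
      omega
    · apply hx
      simp only [Fin.lt_def, heZ]
      rw [if_neg (by omega)]
      omega
  have huv : u ≤ v := le_of_lt (hx (by simp [Fin.lt_def]))
  have hdd := hmono z hzH hzm hu_mem hv_mem huv
  have hcomp_u : (Fin.snoc z u ∘ Fin.cast (by omega : m + 2 = m + 2 - 1 + 1)) = Fin.snoc z u := by
    funext i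
    rfl
  have hcomp_v : (Fin.snoc z v ∘ Fin.cast (by omega : m + 2 = m + 2 - 1 + 1)) = Fin.snoc z v := by
    funext i
    rfl
  simp only [divDiff] at hdd
  rw [hcomp_u, hcomp_v, hFnum] at hdd
  -- rewrite numerators via g
  have hNf : ∀ a : Fin (m + 2) → ℝ,
      Phi (Fin.snoc ω'' f) a = Phi (Fin.snoc ω'' g) a + c (Fin.last (m + 1)) * Phi ω a := by
    intro a
    rw [hNg a]
    ring
  rw [hNf, hNf, hNgu, hNgv, zero_add] at hdd
  rw [mul_div_assoc, div_self hDu0, mul_one] at hdd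
  have hdd2 : 0 ≤ g v * Phi ω'' z / Phi ω (Fin.snoc z v) := by
    have expand : (g v * Phi ω'' z + c (Fin.last (m + 1)) * Phi ω (Fin.snoc z v)) /
        Phi ω (Fin.snoc z v)
        = g v * Phi ω'' z / Phi ω (Fin.snoc z v) + c (Fin.last (m + 1)) := by
      rw [add_div, mul_div_assoc (c (Fin.last (m + 1))), div_self hDv0, mul_one]
    rw [expand] at hdd
    linarith
  have hprod : 0 ≤ (g v * Phi ω'' z) * Phi ω (Fin.snoc z v) := by
    rcases div_nonneg_iff.mp hdd2 with ⟨h1, h2⟩ | ⟨h1, h2⟩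
    · exact mul_nonneg h1 h2
    · nlinarith [mul_nonneg (neg_nonneg.2 h1) (neg_nonneg.2 h2)]
  have hkey : 0 ≤ ε * g v := by
    rw [hDv] at hprod
    nlinarith [mul_pos hPz hPs, hεsq, sq_nonneg (ε * g v)]
  -- final expansion
  set j0 : Fin (m + 3) := ⟨ℓ + 1, by omega⟩ with hj0
  have hexp : Phi (Fin.snoc ω g) x = (-1 : ℝ) ^ ((m + 2) + (ℓ + 1)) * g v *
      Phi ω (x ∘ j0.succAbove) := by
    have hfun : (fun i : Fin (m + 2) =>
        (Fin.snoc ω g : Fin (m + 3) → ℝ → ℝ) (Fin.castSucc i)) = ω := by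
      funext i
      simp
    have hval : ((j0 : Fin (m + 3)) : ℕ) = ℓ + 1 := rfl
    have hxj0 : x j0 = v := by rw [hvdef]
    rw [Phi_expand_single _ _ j0 ?hrow, hfun, Fin.snoc_last, hxj0, hval]
    case hrow =>
      intro j hj
      rw [Fin.snoc_last]
      apply hg
      intro hcontra
      exact hj (by ext; exact hcontra)
  have hPv : 0 < Phi ω (x ∘ j0.succAbove) :=
    hω _ (fun i => hxH _) (hx.comp (Fin.strictMono_succAbove j0))
  have hsign2 : (-1 : ℝ) ^ ((m + 2) + (ℓ + 1)) = ε := by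
    rw [hε, show (m + 2) + (ℓ + 1) = (m + 1 - ℓ) + 2 * (ℓ + 1) from by omega, pow_add,
      pow_mul]
    norm_num
  rw [hfinal_eq, hexp, hsign2]
  exact mul_nonneg hkey hPv.le
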